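/- The map sending w to Σ_{i≥0} (φ − α)^i(w) ⊗ e_i (a finite sum, since w is annihilated by a power of φ − α) is a well-defined ℂ-linear isomorphism from the generalized α-eigenspace W_α onto the kernel of φ_∞. -/

import Mathlib

/-!
Let `W` be a complex vector space, `φ : W → W` a `ℂ`-linear endomorphism, `α ∈ ℂ`.
Let `W_∞ = ℕ →₀ W` and `Φ = φ_∞` the `ℂ`-linear map with
`φ_∞(w ⊗ e_k) = (φ − α)(w) ⊗ e_k − w ⊗ e_{k−1}` (`e_{−1} = 0`).
Let `Wα = {w : ∃ N, (φ − α)^N w = 0}` be the generalized `α`-eigenspace.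
Then `w ↦ Σ_{i≥0} (φ − α)^i(w) ⊗ e_i` is a well-defined `ℂ`-linear isomorphism
from `Wα` onto `ker φ_∞`.
-/
theorem gen_eigenspace_iso_ker_phi_infty {W : Type*} [AddCommGroup W] [Module ℂ W]
    (φ : Module.End ℂ W) (α : ℂ)
    (Φ : (ℕ →₀ W) →ₗ[ℂ] (ℕ →₀ W))
    (hΦ : ∀ (k : ℕ) (w : W),
      Φ (Finsupp.single k w) =
        Finsupp.single k ((φ - α • 1) w) -
          (if k = 0 then 0 else Finsupp.single (k - 1) w))
    (Wα : Submodule ℂ W)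
    (hWα : ∀ w : W, w ∈ Wα ↔ ∃ N : ℕ, ((φ - α • 1) ^ N) w = 0) :
    ∃ F : Wα →ₗ[ℂ] LinearMap.ker Φ,
      (∀ (w : Wα) (i : ℕ), ((F w : ℕ →₀ W)) i = ((φ - α • 1) ^ i) (w : W)) ∧
        Function.Bijective F := by
  classical
  set ψ : Module.End ℂ W := φ - α • 1 with hψ
  -- coordinate formula for Φ
  have key : ∀ (v : ℕ →₀ W) (k : ℕ), Φ v k = ψ (v k) - v (k + 1) := by
    intro v
    induction v using Finsupp.induction_linear with
    | zero => intro k; simp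
    | add f g hf hg =>
        intro k
        simp only [map_add, Finsupp.add_apply, hf k, hg k]
        abel
    | single j x =>
        intro k
        rw [hΦ]
        rcases eq_or_ne j 0 with rfl | hj
        · simp [Finsupp.single_apply, apply_ite ψ]
        · simp only [if_neg hj, Finsupp.sub_apply, Finsupp.single_apply,
            apply_ite ψ, map_zero]
          have h1 : (j - 1 = k) ↔ (j = k + 1) := by omega
          split_ifs <;> simp_all
  have mem_ker : ∀ v : ℕ →₀ W, v ∈ LinearMap.ker Φ ↔ ∀ k, ψ (v k) = v (k + 1) := by
    intro v
    rw [LinearMap.mem_ker, Finsupp.ext_iff]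
    constructor
    · intro h k
      have := h k
      rw [key] at this
      simpa [sub_eq_zero] using this
    · intro h k
      rw [key, h k]
      simp
  have step : ∀ v : ℕ →₀ W, v ∈ LinearMap.ker Φ → ∀ i, v i = (ψ ^ i) (v 0) := by
    intro v hv i
    induction i with
    | zero => simp
    | succ n ih =>
        rw [← (mem_ker v).1 hv n, ih, pow_succ', Module.End.mul_apply]
  -- construction
  have hmem : ∀ w : Wα, ∃ N : ℕ, (ψ ^ N) (w : W) = 0 := fun w => (hWα w).1 w.2
  have hbd : ∀ (w : Wα) (i : ℕ), Classical.choose (hmem w) ≤ i → (ψ ^ i) (w : W) = 0 := by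
    intro w i hi
    have h0 := Classical.choose_spec (hmem w)
    set N := Classical.choose (hmem w)
    have : ψ ^ i = ψ ^ (i - N) * ψ ^ N := by rw [← pow_add]; congr 1; omega
    rw [this, Module.End.mul_apply, h0, map_zero]
  let f : Wα → (ℕ →₀ W) := fun w =>
    Finsupp.onFinset (Finset.range (Classical.choose (hmem w)))
      (fun i => (ψ ^ i) (w : W))
      (by
        intro i hi
        rw [Finset.mem_range]
        by_contra h
        exact hi (hbd w i (by omega)))
  have f_apply : ∀ (w : Wα) (i : ℕ), f w i = (ψ ^ i) (w : W) := fun w i => rfl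
  have f_ker : ∀ w : Wα, f w ∈ LinearMap.ker Φ := by
    intro w
    rw [mem_ker]
    intro k
    rw [f_apply, f_apply, pow_succ', Module.End.mul_apply]
  let F : Wα →ₗ[ℂ] LinearMap.ker Φ :=
    { toFun := fun w => ⟨f w, f_ker w⟩
      map_add' := by
        intro a b
        ext i
        simp [f_apply, map_add]
      map_smul' := by
        intro c a
        ext i
        simp [f_apply] }
  refine ⟨F, fun w i => f_apply w i, ?_, ?_⟩
  · intro a b hab
    have h0 : f a 0 = f b 0 := congrArg (fun x : LinearMap.ker Φ => (x : ℕ →₀ W) 0) hab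
    rw [f_apply, f_apply] at h0
    exact Subtype.ext (by simpa using h0)
  · intro v
    set w0 : W := (v : ℕ →₀ W) 0 with hw0
    have hvk := step (v : ℕ →₀ W) v.2
    have hw0mem : w0 ∈ Wα := by
      rw [hWα]
      refine ⟨(v : ℕ →₀ W).support.sup id + 1, ?_⟩
      have hN : (v : ℕ →₀ W) ((v : ℕ →₀ W).support.sup id + 1) = 0 := by
        apply Finsupp.notMem_support_iff.1
        intro h
        have h2 := Finset.le_sup (f := id) h
        simp only [id_eq] at h2
        omega
      rw [hvk] at hN
      exact hN
    refine ⟨⟨w0, hw0mem⟩, ?_⟩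
    apply Subtype.ext
    ext i
    show f ⟨w0, hw0mem⟩ i = (v : ℕ →₀ W) i
    rw [f_apply]
    exact (hvk i).symm
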